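/- The closure of ℍ_N in ℂ⁴ equals {π(A) : A ∈ M₂(ℂ), ‖A‖ ≤ 1}. Moreover, setting β = 1 − |x₁|² − |x₂|² + |x₃|² and δ = |x₁x₂ − x₃|, a point (a, x₁, x₂, x₃) ∈ ℂ⁴ lies in closure(ℍ_N) if and only if (x₁, x₂, x₃) ∈ closure(𝔼) and either (a = 0 and x₃ = x₁x₂) or (a ≠ 0 and β − √(β² − 4δ²) ≤ 2|a|² ≤ β + √(β² − 4δ²)). -/

import Mathlib

set_option maxHeartbeats 1600000
set_option synthInstance.maxHeartbeats 400000


noncomputable section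

open Complex

/-- The expression `1 - x₁ z₁ - x₂ z₂ + x₃ z₁ z₂`. -/
def hexDen (x : ℂ × ℂ × ℂ) (z₁ z₂ : ℂ) : ℂ :=
  1 - x.1 * z₁ - x.2.1 * z₂ + x.2.2 * z₁ * z₂

/-- The tetrablock `𝔼 ⊆ ℂ³`. -/
def tetrablock : Set (ℂ × ℂ × ℂ) :=
  {x | ∀ z₁ z₂ : ℂ, ‖z₁‖ ≤ 1 → ‖z₂‖ ≤ 1 → hexDen x z₁ z₂ ≠ 0}

/-- The distinguished boundary `b𝔼` of the tetrablock. -/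
def bE : Set (ℂ × ℂ × ℂ) :=
  {x | x.1 = (starRingEnd ℂ) x.2.1 * x.2.2 ∧ ‖x.2.2‖ = 1 ∧ ‖x.2.1‖ ≤ 1}

/-- The linear fractional map `ψ_{z₁,z₂}(a, x₁, x₂, x₃)`. -/
def psi (z₁ z₂ : ℂ) (q : ℂ × ℂ × ℂ × ℂ) : ℂ :=
  q.1 * ((Real.sqrt ((1 - ‖z₁‖ ^ 2) * (1 - ‖z₂‖ ^ 2)) : ℝ) : ℂ) / hexDen q.2 z₁ z₂

/-- `sup_{z₁,z₂ ∈ 𝔻} |ψ_{z₁,z₂}(q)|`. -/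
def supPsi (q : ℂ × ℂ × ℂ × ℂ) : ℝ :=
  sSup {r : ℝ | ∃ z₁ z₂ : ℂ, ‖z₁‖ < 1 ∧ ‖z₂‖ < 1 ∧ r = ‖psi z₁ z₂ q‖}

/-- The function `K_*` on the tetrablock. -/
def Kstar (x : ℂ × ℂ × ℂ) : ℝ :=
  sSup {r : ℝ | ∃ z₁ z₂ : ℂ, ‖z₁‖ < 1 ∧ ‖z₂‖ < 1 ∧
    r = Real.sqrt ((1 - ‖z₁‖ ^ 2) * (1 - ‖z₂‖ ^ 2)) / ‖hexDen x z₁ z₂‖}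

/-- The hexablock `ℍ ⊆ ℂ⁴`. -/
def hexablock : Set (ℂ × ℂ × ℂ × ℂ) :=
  {q | q.2 ∈ tetrablock ∧ supPsi q < 1}

/-- Operator norm of a `2 × 2` complex matrix acting on Euclidean `ℂ²`. -/
def opNorm2 (A : Matrix (Fin 2) (Fin 2) ℂ) : ℝ :=
  ‖Matrix.toEuclideanCLM (𝕜 := ℂ) A‖

/-- `π(A) = (a₂₁, a₁₁, a₂₂, det A)`. -/
def piMap (A : Matrix (Fin 2) (Fin 2) ℂ) : ℂ × ℂ × ℂ × ℂ :=
  (A 1 0, A 0 0, A 1 1, A.det)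

/-- The structured singular value `μ_hexa`, valued in `[0, ∞]`;
the infimum over the empty set is `∞`, whose inverse is `0`. -/
def muHexa (A : Matrix (Fin 2) (Fin 2) ℂ) : ENNReal :=
  (sInf {r : ENNReal | ∃ X : Matrix (Fin 2) (Fin 2) ℂ,
      X 1 0 = 0 ∧ (1 - A * X).det = 0 ∧ r = ENNReal.ofReal (opNorm2 X)})⁻¹

/-- The μ-hexablock `ℍ_μ`. -/
def hexMu : Set (ℂ × ℂ × ℂ × ℂ) :=
  {q | ∃ A : Matrix (Fin 2) (Fin 2) ℂ, muHexa A < 1 ∧ piMap A = q}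

/-- The normed hexablock `ℍ_N`. -/
def hexN : Set (ℂ × ℂ × ℂ × ℂ) :=
  {q | ∃ A : Matrix (Fin 2) (Fin 2) ℂ, opNorm2 A < 1 ∧ piMap A = q}

/-- `ℍ_p = π(𝒰(2))`. -/
def hexP : Set (ℂ × ℂ × ℂ × ℂ) :=
  {q | ∃ U : Matrix (Fin 2) (Fin 2) ℂ, U ∈ Matrix.unitaryGroup (Fin 2) ℂ ∧ piMap U = q}

/-- Evaluation of a polynomial in four variables at a point of `ℂ⁴`. -/
def evalPoly4 (p : MvPolynomial (Fin 4) ℂ) (q : ℂ × ℂ × ℂ × ℂ) : ℂ :=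
  MvPolynomial.eval ![q.1, q.2.1, q.2.2.1, q.2.2.2] p

/-- Polynomial convexity of a subset of `ℂ⁴`. -/
def PolyConvex (K : Set (ℂ × ℂ × ℂ × ℂ)) : Prop :=
  ∀ z ∉ K, ∃ p : MvPolynomial (Fin 4) ℂ,
    (∀ w ∈ K, ‖evalPoly4 p w‖ ≤ 1) ∧ 1 < ‖evalPoly4 p z‖

/-- Polynomial convex hull of a subset of `ℂ⁴`. -/
def polyHull (K : Set (ℂ × ℂ × ℂ × ℂ)) : Set (ℂ × ℂ × ℂ × ℂ) :=
  {z | ∀ p : MvPolynomial (Fin 4) ℂ,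
    ‖evalPoly4 p z‖ ≤ sSup {r : ℝ | ∃ w ∈ K, r = ‖evalPoly4 p w‖}}

/-- The pentablock `𝒫 ⊆ ℂ³`. -/
def pentablock : Set (ℂ × ℂ × ℂ) :=
  {q | ∃ A : Matrix (Fin 2) (Fin 2) ℂ, opNorm2 A < 1 ∧ (A 1 0, A 0 0 + A 1 1, A.det) = q}

lemma nsq (z : ℂ) : ‖z‖^2 = z.re^2 + z.im^2 := by
  rw [Complex.sq_norm, Complex.normSq_apply]; ring

lemma claim1 (a b c d v₁ v₂ : ℂ) :
    ‖v₁‖^2 + ‖v₂‖^2 - (‖a*v₁+b*v₂‖^2 + ‖c*v₁+d*v₂‖^2)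
      = (1-‖a‖^2-‖c‖^2)*‖v₁‖^2 + (1-‖b‖^2-‖d‖^2)*‖v₂‖^2
        - 2*((a*(starRingEnd ℂ b) + c*(starRingEnd ℂ d)) * v₁ * (starRingEnd ℂ v₂)).re := by
  simp only [nsq, Complex.add_re, Complex.add_im, Complex.mul_re, Complex.mul_im,
    Complex.conj_re, Complex.conj_im]
  ring

lemma claim2 (a b c d : ℂ) :
    (1-‖a‖^2-‖c‖^2)*(1-‖b‖^2-‖d‖^2) - ‖a*(starRingEnd ℂ b) + c*(starRingEnd ℂ d)‖^2
      = 1 - (‖a‖^2+‖b‖^2+‖c‖^2+‖d‖^2) + ‖a*d-b*c‖^2 := by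
  simp only [nsq, Complex.add_re, Complex.add_im, Complex.sub_re, Complex.sub_im,
    Complex.mul_re, Complex.mul_im, Complex.conj_re, Complex.conj_im]
  ring

lemma key_forward (p r : ℝ) (q : ℂ)
    (h : ∀ v₁ v₂ : ℂ, 0 ≤ p*‖v₁‖^2 + r*‖v₂‖^2 - 2*(q*v₁*(starRingEnd ℂ v₂)).re) :
    ‖q‖^2 ≤ p*r := by
  have hp0 : 0 ≤ p := by have := h 1 0; simpa using this
  have hr0 : 0 ≤ r := by have := h 0 1; simpa using this
  rcases eq_or_ne q 0 with h0 | h0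
  · rw [h0]; simpa using mul_nonneg hp0 hr0
  rcases lt_or_eq_of_le hp0 with hpp | hpp
  · have h3 := h ((starRingEnd ℂ) q) ((p:ℝ):ℂ)
    have e1 : ‖(starRingEnd ℂ) q‖ = ‖q‖ := RCLike.norm_conj q
    have e2 : (q * ((starRingEnd ℂ) q) * (starRingEnd ℂ) ((p:ℝ):ℂ)).re = ‖q‖^2 * p := by
      rw [Complex.mul_conj, Complex.conj_ofReal, ← Complex.ofReal_mul, Complex.ofReal_re,
        Complex.normSq_eq_norm_sq]
    have e3 : ‖((p:ℝ):ℂ)‖^2 = p^2 := by rw [Complex.norm_real, Real.norm_eq_abs, _root_.sq_abs]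
    rw [e1, e2, e3] at h3
    have h6 : 0 ≤ p * (p*r - ‖q‖^2) := by nlinarith [h3]
    nlinarith [h6, hpp]
  · exfalso
    have hq2 : 0 < ‖q‖^2 := pow_pos (norm_pos_iff.mpr h0) 2
    set t : ℝ := (r+1)/2/‖q‖^2 with ht
    have h3 := h ((t:ℂ) * (starRingEnd ℂ) q) 1
    have e2 : (q * ((t:ℂ) * (starRingEnd ℂ) q) * (starRingEnd ℂ) 1).re = t * ‖q‖^2 := by
      rw [map_one, mul_one]
      have e : q * ((t:ℂ) * (starRingEnd ℂ) q) = (t:ℂ) * (q * (starRingEnd ℂ) q) := by ring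
      rw [e, Complex.mul_conj, ← Complex.ofReal_mul, Complex.ofReal_re,
        Complex.normSq_eq_norm_sq]
    have e4 : ‖(t:ℂ) * (starRingEnd ℂ) q‖^2 = t^2 * ‖q‖^2 := by
      rw [norm_mul, mul_pow, RCLike.norm_conj, Complex.norm_real, Real.norm_eq_abs, _root_.sq_abs]
    have e5 : ‖(1:ℂ)‖^2 = 1 := by simp
    rw [e2, e4, e5] at h3
    have e6 : t * ‖q‖^2 = (r+1)/2 := by
      rw [ht]; exact div_mul_cancel₀ _ (ne_of_gt hq2)
    rw [← hpp] at h3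
    rw [e6] at h3
    linarith

lemma amgm (p r qn X Y : ℝ) (hp : 0 ≤ p) (hr : 0 ≤ r) (hq : 0 ≤ qn)
    (hX : 0 ≤ X) (hY : 0 ≤ Y) (hpr : qn^2 ≤ p*r) : 2*(qn*(X*Y)) ≤ p*X^2 + r*Y^2 := by
  have h1 : qn ≤ Real.sqrt (p*r) := by
    rw [show qn = Real.sqrt (qn^2) by rw [Real.sqrt_sq hq]]
    exact Real.sqrt_le_sqrt hpr
  have h2 : Real.sqrt (p*r) = Real.sqrt p * Real.sqrt r := Real.sqrt_mul hp r
  nlinarith [sq_nonneg (Real.sqrt p * X - Real.sqrt r * Y), Real.sq_sqrt hp, Real.sq_sqrt hr,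
    mul_nonneg hX hY, Real.sqrt_nonneg p, Real.sqrt_nonneg r]

lemma key_backward (p r : ℝ) (q : ℂ) (hsum : 0 ≤ p + r) (hprod : ‖q‖^2 ≤ p*r)
    (v₁ v₂ : ℂ) : 0 ≤ p*‖v₁‖^2 + r*‖v₂‖^2 - 2*(q*v₁*(starRingEnd ℂ v₂)).re := by
  have hq0 : (0:ℝ) ≤ ‖q‖^2 := by positivity
  have hp0 : 0 ≤ p := by nlinarith
  have hr0 : 0 ≤ r := by nlinarith
  have hre : (q * v₁ * (starRingEnd ℂ) v₂).re ≤ ‖q‖ * (‖v₁‖ * ‖v₂‖) := by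
    calc (q * v₁ * (starRingEnd ℂ) v₂).re ≤ ‖q * v₁ * (starRingEnd ℂ) v₂‖ := Complex.re_le_norm _
      _ = ‖q‖ * (‖v₁‖ * ‖v₂‖) := by rw [norm_mul, norm_mul, RCLike.norm_conj]; ring
  have := amgm p r ‖q‖ ‖v₁‖ ‖v₂‖ hp0 hr0 (norm_nonneg q) (norm_nonneg v₁) (norm_nonneg v₂) hprod
  linarith

lemma quad_iff (a b c d : ℂ) :
    (∀ v₁ v₂ : ℂ, ‖a*v₁+b*v₂‖^2 + ‖c*v₁+d*v₂‖^2 ≤ ‖v₁‖^2+‖v₂‖^2) ↔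
    (‖a‖^2+‖b‖^2+‖c‖^2+‖d‖^2 ≤ 2 ∧
      ‖a‖^2+‖b‖^2+‖c‖^2+‖d‖^2 ≤ 1 + ‖a*d-b*c‖^2) := by
  constructor
  · intro h
    have h' : ∀ v₁ v₂ : ℂ, 0 ≤ (1-‖a‖^2-‖c‖^2)*‖v₁‖^2 + (1-‖b‖^2-‖d‖^2)*‖v₂‖^2
        - 2*((a*(starRingEnd ℂ b) + c*(starRingEnd ℂ d)) * v₁ * (starRingEnd ℂ v₂)).re := by
      intro v₁ v₂
      have := claim1 a b c d v₁ v₂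
      linarith [h v₁ v₂]
    have hkey := key_forward _ _ _ h'
    have h1 : ‖a‖^2+‖c‖^2 ≤ 1 := by have := h 1 0; simpa using this
    have h2 : ‖b‖^2+‖d‖^2 ≤ 1 := by have := h 0 1; simpa using this
    exact ⟨by linarith, by linarith [claim2 a b c d]⟩
  · rintro ⟨h1, h2⟩ v₁ v₂
    have hprod : ‖a*(starRingEnd ℂ b) + c*(starRingEnd ℂ d)‖^2
        ≤ (1-‖a‖^2-‖c‖^2)*(1-‖b‖^2-‖d‖^2) := by linarith [claim2 a b c d]
    have hsum : 0 ≤ (1-‖a‖^2-‖c‖^2) + (1-‖b‖^2-‖d‖^2) := by linarith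
    have := key_backward _ _ _ hsum hprod v₁ v₂
    linarith [claim1 a b c d v₁ v₂]

lemma toE_norm_sq (A : Matrix (Fin 2) (Fin 2) ℂ) (v : EuclideanSpace ℂ (Fin 2)) :
    ‖Matrix.toEuclideanCLM (𝕜 := ℂ) A v‖^2
      = ‖A 0 0 * v 0 + A 0 1 * v 1‖^2 + ‖A 1 0 * v 0 + A 1 1 * v 1‖^2 := by
  rw [EuclideanSpace.norm_eq, Real.sq_sqrt (by positivity), Fin.sum_univ_two]
  have h0 : (Matrix.toEuclideanCLM (𝕜 := ℂ) A v) 0 = A.mulVec v 0 := rfl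
  have h1 : (Matrix.toEuclideanCLM (𝕜 := ℂ) A v) 1 = A.mulVec v 1 := rfl
  rw [h0, h1]
  simp [Matrix.mulVec, dotProduct, Fin.sum_univ_two]

lemma euc_norm_sq (v : EuclideanSpace ℂ (Fin 2)) : ‖v‖^2 = ‖v 0‖^2 + ‖v 1‖^2 := by
  rw [EuclideanSpace.norm_eq, Real.sq_sqrt (by positivity), Fin.sum_univ_two]

lemma opNorm2_le_one_iff' (A : Matrix (Fin 2) (Fin 2) ℂ) :
    opNorm2 A ≤ 1 ↔ ∀ v₁ v₂ : ℂ,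
      ‖A 0 0 * v₁ + A 0 1 * v₂‖^2 + ‖A 1 0 * v₁ + A 1 1 * v₂‖^2 ≤ ‖v₁‖^2 + ‖v₂‖^2 := by
  rw [opNorm2, ContinuousLinearMap.opNorm_le_iff zero_le_one]
  constructor
  · intro h v₁ v₂
    set v : EuclideanSpace ℂ (Fin 2) := (WithLp.equiv 2 (Fin 2 → ℂ)).symm ![v₁, v₂] with hv
    have hv0 : v 0 = v₁ := rfl
    have hv1 : v 1 = v₂ := rfl
    have := h v
    rw [one_mul] at this
    have hsq : ‖Matrix.toEuclideanCLM (𝕜 := ℂ) A v‖^2 ≤ ‖v‖^2 := by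
      have h1 := norm_nonneg (Matrix.toEuclideanCLM (𝕜 := ℂ) A v)
      nlinarith [this, norm_nonneg v]
    rw [toE_norm_sq, euc_norm_sq, hv0, hv1] at hsq
    exact hsq
  · intro h v
    rw [one_mul]
    have hsq : ‖Matrix.toEuclideanCLM (𝕜 := ℂ) A v‖^2 ≤ ‖v‖^2 := by
      rw [toE_norm_sq, euc_norm_sq]; exact h (v 0) (v 1)
    have := norm_nonneg v
    nlinarith [norm_nonneg (Matrix.toEuclideanCLM (𝕜 := ℂ) A v)]

lemma opNorm2_le_one_iff (A : Matrix (Fin 2) (Fin 2) ℂ) :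
    opNorm2 A ≤ 1 ↔ (‖A 0 0‖^2+‖A 0 1‖^2+‖A 1 0‖^2+‖A 1 1‖^2 ≤ 2 ∧
      ‖A 0 0‖^2+‖A 0 1‖^2+‖A 1 0‖^2+‖A 1 1‖^2 ≤ 1 + ‖A.det‖^2) := by
  rw [opNorm2_le_one_iff', quad_iff, Matrix.det_fin_two]

lemma opNorm2_nonneg (A : Matrix (Fin 2) (Fin 2) ℂ) : 0 ≤ opNorm2 A := norm_nonneg _

lemma opNorm2_mul_le (A B : Matrix (Fin 2) (Fin 2) ℂ) :
    opNorm2 (A * B) ≤ opNorm2 A * opNorm2 B := by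
  unfold opNorm2
  rw [map_mul]
  exact norm_mul_le _ _

lemma opNorm2_smul (c : ℂ) (A : Matrix (Fin 2) (Fin 2) ℂ) :
    opNorm2 (c • A) = ‖c‖ * opNorm2 A := by
  unfold opNorm2
  rw [map_smul]
  exact norm_smul c (Matrix.toEuclideanCLM (𝕜 := ℂ) A)

lemma isUnit_one_sub (M : Matrix (Fin 2) (Fin 2) ℂ) (h : opNorm2 M < 1) :
    IsUnit (1 - M) := by
  have hu : IsUnit (1 - Matrix.toEuclideanCLM (𝕜 := ℂ) M) := (Units.oneSub _ h).isUnit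
  have h2 : IsUnit (Matrix.toEuclideanCLM (𝕜 := ℂ) (1 - M)) := by
    rw [map_sub, map_one]; exact hu
  have h3 := IsUnit.map (Matrix.toEuclideanCLM (𝕜 := ℂ)).symm h2
  rwa [StarAlgEquiv.symm_apply_apply] at h3

lemma det_one_sub_mul (A : Matrix (Fin 2) (Fin 2) ℂ) (z₁ z₂ : ℂ) :
    (1 - A * Matrix.of ![![z₁,0],![0,z₂]]).det
      = 1 - A 0 0 * z₁ - A 1 1 * z₂ + A.det * z₁ * z₂ := by
  rw [Matrix.det_fin_two, Matrix.det_fin_two]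
  simp [Matrix.mul_apply, Fin.sum_univ_two, Matrix.one_apply, Matrix.sub_apply]
  ring

lemma mem_tetra_of_lt (A : Matrix (Fin 2) (Fin 2) ℂ) (h : opNorm2 A < 1) :
    (A 0 0, A 1 1, A.det) ∈ tetrablock := by
  intro z₁ z₂ hz₁ hz₂
  set D : Matrix (Fin 2) (Fin 2) ℂ := Matrix.of ![![z₁,0],![0,z₂]] with hD
  have hD00 : D 0 0 = z₁ := rfl
  have hD01 : D 0 1 = 0 := rfl
  have hD10 : D 1 0 = 0 := rfl
  have hD11 : D 1 1 = z₂ := rfl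
  have hDdet : D.det = z₁ * z₂ := by rw [Matrix.det_fin_two, hD00, hD01, hD10, hD11]; ring
  have hDn : opNorm2 D ≤ 1 := by
    rw [opNorm2_le_one_iff, hD00, hD01, hD10, hD11, hDdet]
    have e1 : ‖z₁‖^2 ≤ 1 := pow_le_one₀ (norm_nonneg _) hz₁
    have e2 : ‖z₂‖^2 ≤ 1 := pow_le_one₀ (norm_nonneg _) hz₂
    simp only [norm_zero]
    constructor
    · nlinarith
    · rw [norm_mul, mul_pow]
      nlinarith [mul_nonneg (sub_nonneg.mpr e1) (sub_nonneg.mpr e2)]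
  have hAD : opNorm2 (A * D) < 1 :=
    lt_of_le_of_lt (le_trans (opNorm2_mul_le A D)
      (mul_le_of_le_one_right (opNorm2_nonneg A) hDn)) h
  have hdet : (1 - A * D).det ≠ 0 := by
    have := (Matrix.isUnit_iff_isUnit_det _).mp (isUnit_one_sub _ hAD)
    exact this.ne_zero
  have he : hexDen (A 0 0, A 1 1, A.det) z₁ z₂ = (1 - A * D).det := by
    rw [hD, det_one_sub_mul]; simp [hexDen]
  rw [he]
  exact hdet

lemma entry_cont (i j : Fin 2) : Continuous fun A : Matrix (Fin 2) (Fin 2) ℂ => A i j :=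
  (continuous_apply j).comp (continuous_apply i)

lemma det_cont : Continuous fun A : Matrix (Fin 2) (Fin 2) ℂ => A.det := by
  simp only [Matrix.det_fin_two]
  exact ((entry_cont 0 0).mul (entry_cont 1 1)).sub ((entry_cont 0 1).mul (entry_cont 1 0))

lemma piMap_cont : Continuous piMap := by
  unfold piMap
  exact (entry_cont 1 0).prodMk (((entry_cont 0 0)).prodMk
    ((entry_cont 1 1).prodMk det_cont))

lemma closure_aux {α : Type*} [TopologicalSpace α] (f : ℝ → α) (hf : Continuous f) (s : Set α)
    (h : ∀ r : ℝ, r ∈ Set.Ico (0:ℝ) 1 → f r ∈ s) : f 1 ∈ closure s := by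
  have h1 : (1:ℝ) ∈ closure (Set.Ico (0:ℝ) 1) := by
    rw [closure_Ico (by norm_num : (0:ℝ) ≠ 1)]
    exact Set.right_mem_Icc.mpr (by norm_num)
  have h2 : f 1 ∈ f '' closure (Set.Ico (0:ℝ) 1) := ⟨1, h1, rfl⟩
  have h3 := Set.mem_of_mem_of_subset h2 (image_closure_subset_closure_image hf)
  refine closure_mono ?_ h3
  rintro _ ⟨r, hr, rfl⟩
  exact h r hr

lemma smul_opNorm_lt (A : Matrix (Fin 2) (Fin 2) ℂ) (hA : opNorm2 A ≤ 1)
    (r : ℝ) (hr : r ∈ Set.Ico (0:ℝ) 1) : opNorm2 (((r:ℂ)) • A) < 1 := by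
  rw [opNorm2_smul, Complex.norm_real, Real.norm_eq_abs, _root_.abs_of_nonneg hr.1]
  calc r * opNorm2 A ≤ r * 1 := by
        have := (norm_nonneg (Matrix.toEuclideanCLM (𝕜 := ℂ) A))
        exact mul_le_mul_of_nonneg_left hA hr.1
    _ < 1 := by rw [mul_one]; exact hr.2

lemma smul_piMap (r : ℝ) (A : Matrix (Fin 2) (Fin 2) ℂ) :
    piMap (((r:ℂ)) • A) = ((r:ℂ) * A 1 0, (r:ℂ) * A 0 0, (r:ℂ) * A 1 1, (r:ℂ)^2 * A.det) := by
  unfold piMap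
  rw [Matrix.det_smul]
  simp [Matrix.smul_apply, smul_eq_mul, Fintype.card_fin]

lemma mem_closure_tetra_of_le (A : Matrix (Fin 2) (Fin 2) ℂ) (hA : opNorm2 A ≤ 1) :
    (A 0 0, A 1 1, A.det) ∈ closure tetrablock := by
  have := closure_aux (f := fun r : ℝ => ((r:ℂ) * A 0 0, (r:ℂ) * A 1 1, (r:ℂ)^2 * A.det))
    (by fun_prop) tetrablock (fun r hr => by
      have h1 := mem_tetra_of_lt (((r:ℂ)) • A) (smul_opNorm_lt A hA r hr)
      have e : ((((r:ℂ)) • A) 0 0, (((r:ℂ)) • A) 1 1, (((r:ℂ)) • A).det)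
          = ((r:ℂ) * A 0 0, (r:ℂ) * A 1 1, (r:ℂ)^2 * A.det) := by
        rw [Matrix.det_smul]
        simp [Matrix.smul_apply, smul_eq_mul, Fintype.card_fin]
      rwa [e] at h1)
  simpa using this

lemma piMap_mem_closure (A : Matrix (Fin 2) (Fin 2) ℂ) (hA : opNorm2 A ≤ 1) :
    piMap A ∈ closure hexN := by
  have := closure_aux
    (f := fun r : ℝ => ((r:ℂ) * A 1 0, (r:ℂ) * A 0 0, (r:ℂ) * A 1 1, (r:ℂ)^2 * A.det))
    (by fun_prop) hexN (fun r hr =>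
      ⟨((r:ℂ)) • A, smul_opNorm_lt A hA r hr, smul_piMap r A⟩)
  simp only [Complex.ofReal_one, one_mul, one_pow] at this
  simpa [piMap] using this

lemma isCompact_ball : IsCompact {A : Matrix (Fin 2) (Fin 2) ℂ | opNorm2 A ≤ 1} := by
  have hclosed : IsClosed {A : Matrix (Fin 2) (Fin 2) ℂ | opNorm2 A ≤ 1} := by
    have : {A : Matrix (Fin 2) (Fin 2) ℂ | opNorm2 A ≤ 1}
        = ⋂ (v₁ : ℂ) (v₂ : ℂ), {A : Matrix (Fin 2) (Fin 2) ℂ |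
            ‖A 0 0 * v₁ + A 0 1 * v₂‖^2 + ‖A 1 0 * v₁ + A 1 1 * v₂‖^2 ≤ ‖v₁‖^2 + ‖v₂‖^2} := by
      ext A
      simp only [Set.mem_setOf_eq, Set.mem_iInter, opNorm2_le_one_iff']
    rw [this]
    refine isClosed_iInter fun v₁ => isClosed_iInter fun v₂ => isClosed_le ?_ continuous_const
    exact ((((entry_cont 0 0).mul continuous_const).add
      ((entry_cont 0 1).mul continuous_const)).norm.pow 2).add
      ((((entry_cont 1 0).mul continuous_const).add
      ((entry_cont 1 1).mul continuous_const)).norm.pow 2)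
  have hsub : {A : Matrix (Fin 2) (Fin 2) ℂ | opNorm2 A ≤ 1}
      ⊆ Set.pi Set.univ (fun _ : Fin 2 => Set.pi Set.univ
          (fun _ : Fin 2 => Metric.closedBall (0:ℂ) 2)) := by
    intro A hA
    have h2 := (opNorm2_le_one_iff A).mp hA |>.1
    intro i _ 
    intro j _
    simp only [Metric.mem_closedBall, dist_zero_right]
    have hnn : ∀ k l : Fin 2, (0:ℝ) ≤ ‖A k l‖^2 := fun k l => sq_nonneg _
    have : ‖A i j‖^2 ≤ 2 := by
      fin_cases i <;> fin_cases j <;>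
        simp only [Fin.zero_eta, Fin.mk_one, Fin.isValue] <;>
        nlinarith [hnn 0 0, hnn 0 1, hnn 1 0, hnn 1 1]
    nlinarith [norm_nonneg (A i j)]
  exact IsCompact.of_isClosed_subset
    (isCompact_univ_pi fun _ => isCompact_univ_pi fun _ => isCompact_closedBall _ _)
    hclosed hsub

lemma closure_hexN_eq : closure hexN
    = {q : ℂ × ℂ × ℂ × ℂ | ∃ A : Matrix (Fin 2) (Fin 2) ℂ, opNorm2 A ≤ 1 ∧ piMap A = q} := by
  apply Set.Subset.antisymm
  · apply closure_minimal
    · rintro q ⟨A, hA, rfl⟩; exact ⟨A, hA.le, rfl⟩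
    · have he : {q : ℂ × ℂ × ℂ × ℂ | ∃ A, opNorm2 A ≤ 1 ∧ piMap A = q}
          = piMap '' {A | opNorm2 A ≤ 1} := by
        ext q
        exact ⟨fun ⟨A, h1, h2⟩ => ⟨A, h1, h2⟩, fun ⟨A, h1, h2⟩ => ⟨A, h1, h2⟩⟩
      rw [he]
      exact (isCompact_ball.image piMap_cont).isClosed
  · rintro q ⟨A, hA, rfl⟩
    exact piMap_mem_closure A hA

lemma tetra_affine1 {x : ℂ × ℂ × ℂ} (hx : x ∈ tetrablock) (ω : ℂ) (hω : ‖ω‖ = 1) :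
    ‖x.1 - x.2.2 * ω‖ ≤ ‖1 - x.2.1 * ω‖ := by
  by_contra hlt
  push_neg at hlt
  have hne : x.1 - x.2.2 * ω ≠ 0 := by
    intro h0; rw [h0, norm_zero] at hlt; exact absurd hlt (not_lt.mpr (norm_nonneg _))
  set z₁ := (1 - x.2.1 * ω) / (x.1 - x.2.2 * ω) with hz
  have hz₁ : ‖z₁‖ ≤ 1 := by
    rw [hz, norm_div]
    exact div_le_one_of_le₀ hlt.le (norm_nonneg _)
  refine hx z₁ ω hz₁ hω.le ?_
  show 1 - x.1 * z₁ - x.2.1 * ω + x.2.2 * z₁ * ω = 0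
  rw [hz]
  have hD := mul_inv_cancel₀ hne
  linear_combination (-(1 - x.2.1 * ω)) * hD

lemma tetra_affine2 {x : ℂ × ℂ × ℂ} (hx : x ∈ tetrablock) (ω : ℂ) (hω : ‖ω‖ = 1) :
    ‖x.2.1 - x.2.2 * ω‖ ≤ ‖1 - x.1 * ω‖ := by
  by_contra hlt
  push_neg at hlt
  have hne : x.2.1 - x.2.2 * ω ≠ 0 := by
    intro h0; rw [h0, norm_zero] at hlt; exact absurd hlt (not_lt.mpr (norm_nonneg _))
  set z₂ := (1 - x.1 * ω) / (x.2.1 - x.2.2 * ω) with hz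
  have hz₂ : ‖z₂‖ ≤ 1 := by
    rw [hz, norm_div]
    exact div_le_one_of_le₀ hlt.le (norm_nonneg _)
  refine hx ω z₂ hω.le hz₂ ?_
  show 1 - x.1 * ω - x.2.1 * z₂ + x.2.2 * ω * z₂ = 0
  rw [hz]
  have hD := mul_inv_cancel₀ hne
  linear_combination (-(1 - x.1 * ω)) * hD

lemma ident1 (x₁ x₂ x₃ ω : ℂ) (hω : ‖ω‖ = 1) :
    ‖1 - x₂*ω‖^2 - ‖x₁ - x₃*ω‖^2
      = 1 + ‖x₂‖^2 - ‖x₁‖^2 - ‖x₃‖^2 - 2*((x₂ - (starRingEnd ℂ) x₁ * x₃)*ω).re := by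
  have h1 : ω.re^2 + ω.im^2 = 1 := by rw [← nsq, hω]; norm_num
  simp only [nsq, Complex.sub_re, Complex.sub_im, Complex.mul_re, Complex.mul_im,
    Complex.one_re, Complex.one_im, Complex.conj_re, Complex.conj_im]
  linear_combination (x₂.re^2 + x₂.im^2 - x₃.re^2 - x₃.im^2) * h1

lemma half_ineq {w : ℂ} {C : ℝ} (h : ∀ ω : ℂ, ‖ω‖ = 1 → 2*(w*ω).re ≤ C) : 2*‖w‖ ≤ C := by
  rcases eq_or_ne w 0 with h0 | h0
  · have := h 1 (by simp)
    simpa [h0] using this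
  · have hw : (0:ℝ) < ‖w‖ := norm_pos_iff.mpr h0
    have hω : ‖(starRingEnd ℂ) w * ((‖w‖:ℝ):ℂ)⁻¹‖ = 1 := by
      rw [norm_mul, RCLike.norm_conj, norm_inv, Complex.norm_real, Real.norm_eq_abs,
        _root_.abs_of_nonneg (norm_nonneg w)]
      field_simp
    have := h _ hω
    have e : (w * ((starRingEnd ℂ) w * ((‖w‖:ℝ):ℂ)⁻¹)).re = ‖w‖ := by
      rw [← mul_assoc, Complex.mul_conj, ← Complex.ofReal_inv, ← Complex.ofReal_mul,
        Complex.ofReal_re, Complex.normSq_eq_norm_sq]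
      rw [pow_two, mul_assoc, mul_inv_cancel₀ (ne_of_gt hw), mul_one]
    rw [e] at this
    exact this

-- 2v ≤ 1 + s² - r² - t²

lemma tetra_v {x : ℂ × ℂ × ℂ} (hx : x ∈ tetrablock) :
    2*‖x.2.1 - (starRingEnd ℂ) x.1 * x.2.2‖ ≤ 1 + ‖x.2.1‖^2 - ‖x.1‖^2 - ‖x.2.2‖^2 := by
  apply half_ineq
  intro ω hω
  have h := tetra_affine1 hx ω hω
  have hsq : ‖x.1 - x.2.2*ω‖^2 ≤ ‖1 - x.2.1*ω‖^2 := by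
    have := norm_nonneg (x.1 - x.2.2*ω); nlinarith [norm_nonneg (1 - x.2.1*ω)]
  have := ident1 x.1 x.2.1 x.2.2 ω hω
  linarith

lemma tetra_u {x : ℂ × ℂ × ℂ} (hx : x ∈ tetrablock) :
    2*‖x.1 - (starRingEnd ℂ) x.2.1 * x.2.2‖ ≤ 1 + ‖x.1‖^2 - ‖x.2.1‖^2 - ‖x.2.2‖^2 := by
  apply half_ineq
  intro ω hω
  have h := tetra_affine2 hx ω hω
  have hsq : ‖x.2.1 - x.2.2*ω‖^2 ≤ ‖1 - x.1*ω‖^2 := by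
    have := norm_nonneg (x.2.1 - x.2.2*ω); nlinarith [norm_nonneg (1 - x.1*ω)]
  have := ident1 x.2.1 x.1 x.2.2 ω hω
  linarith

lemma tetra_r {x : ℂ × ℂ × ℂ} (hx : x ∈ tetrablock) : ‖x.1‖ ≤ 1 := by
  by_contra hlt
  push_neg at hlt
  have hne : x.1 ≠ 0 := by intro h0; rw [h0, norm_zero] at hlt; linarith
  refine hx x.1⁻¹ 0 ?_ (by simp) ?_
  · rw [norm_inv]
    exact inv_le_one_of_one_le₀ hlt.le
  · show 1 - x.1 * x.1⁻¹ - x.2.1 * 0 + x.2.2 * x.1⁻¹ * 0 = 0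
    field_simp
    ring

lemma tetra_s {x : ℂ × ℂ × ℂ} (hx : x ∈ tetrablock) : ‖x.2.1‖ ≤ 1 := by
  by_contra hlt
  push_neg at hlt
  have hne : x.2.1 ≠ 0 := by intro h0; rw [h0, norm_zero] at hlt; linarith
  refine hx 0 x.2.1⁻¹ (by simp) ?_ ?_
  · rw [norm_inv]
    exact inv_le_one_of_one_le₀ hlt.le
  · show 1 - x.1 * 0 - x.2.1 * x.2.1⁻¹ + x.2.2 * 0 * x.2.1⁻¹ = 0
    field_simp
    ring

@[fun_prop] lemma conj_cont : Continuous fun z : ℂ => (starRingEnd ℂ) z := continuous_star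

lemma ident2 (x₁ x₂ x₃ : ℂ) :
    ‖x₁*x₂ - x₃‖^2
      = ‖x₂ - (starRingEnd ℂ) x₁ * x₃‖^2 - (1-‖x₁‖^2)*(‖x₂‖^2-‖x₃‖^2) := by
  simp only [nsq, Complex.sub_re, Complex.sub_im, Complex.mul_re, Complex.mul_im,
    Complex.conj_re, Complex.conj_im]
  ring

lemma closure_v {x : ℂ × ℂ × ℂ} (h : x ∈ closure tetrablock) :
    2*‖x.2.1 - (starRingEnd ℂ) x.1 * x.2.2‖ ≤ 1 + ‖x.2.1‖^2 - ‖x.1‖^2 - ‖x.2.2‖^2 := by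
  have hcl : IsClosed {y : ℂ × ℂ × ℂ | 2*‖y.2.1 - (starRingEnd ℂ) y.1 * y.2.2‖
      ≤ 1 + ‖y.2.1‖^2 - ‖y.1‖^2 - ‖y.2.2‖^2} := isClosed_le (by fun_prop) (by fun_prop)
  exact closure_minimal (fun y hy => tetra_v hy) hcl h

lemma closure_u {x : ℂ × ℂ × ℂ} (h : x ∈ closure tetrablock) :
    2*‖x.1 - (starRingEnd ℂ) x.2.1 * x.2.2‖ ≤ 1 + ‖x.1‖^2 - ‖x.2.1‖^2 - ‖x.2.2‖^2 := by
  have hcl : IsClosed {y : ℂ × ℂ × ℂ | 2*‖y.1 - (starRingEnd ℂ) y.2.1 * y.2.2‖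
      ≤ 1 + ‖y.1‖^2 - ‖y.2.1‖^2 - ‖y.2.2‖^2} := isClosed_le (by fun_prop) (by fun_prop)
  exact closure_minimal (fun y hy => tetra_u hy) hcl h

lemma closure_r {x : ℂ × ℂ × ℂ} (h : x ∈ closure tetrablock) : ‖x.1‖ ≤ 1 := by
  have hcl : IsClosed {y : ℂ × ℂ × ℂ | ‖y.1‖ ≤ 1} := isClosed_le (by fun_prop) (by fun_prop)
  exact closure_minimal (fun y hy => tetra_r hy) hcl h

lemma closure_s {x : ℂ × ℂ × ℂ} (h : x ∈ closure tetrablock) : ‖x.2.1‖ ≤ 1 := by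
  have hcl : IsClosed {y : ℂ × ℂ × ℂ | ‖y.2.1‖ ≤ 1} := isClosed_le (by fun_prop) (by fun_prop)
  exact closure_minimal (fun y hy => tetra_s hy) hcl h

lemma closure_facts {x : ℂ × ℂ × ℂ} (h : x ∈ closure tetrablock) :
    ‖x.1‖ ≤ 1 ∧ ‖x.2.1‖ ≤ 1 ∧ ‖x.2.2‖ ≤ 1 ∧
    (0 ≤ 1 - ‖x.1‖^2 - ‖x.2.1‖^2 + ‖x.2.2‖^2) ∧
    2*‖x.1*x.2.1 - x.2.2‖ ≤ 1 - ‖x.1‖^2 - ‖x.2.1‖^2 + ‖x.2.2‖^2 := by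
  obtain ⟨x₁, x₂, x₃⟩ := x
  have hv := closure_v h
  have hu := closure_u h
  have hr := closure_r h
  have hs := closure_s h
  simp only at hv hu hr hs ⊢
  set r := ‖x₁‖ with hrdef
  set s := ‖x₂‖ with hsdef
  set t := ‖x₃‖ with htdef
  set v := ‖x₂ - (starRingEnd ℂ) x₁ * x₃‖ with hvdef
  set u := ‖x₁ - (starRingEnd ℂ) x₂ * x₃‖ with hudef
  set d := ‖x₁*x₂ - x₃‖ with hddef
  have hr0 : 0 ≤ r := norm_nonneg _
  have hs0 : 0 ≤ s := norm_nonneg _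
  have ht0 : 0 ≤ t := norm_nonneg _
  have hv0 : 0 ≤ v := norm_nonneg _
  have hu0 : 0 ≤ u := norm_nonneg _
  have hd0 : 0 ≤ d := norm_nonneg _
  -- t ≤ 1
  have ht1 : t ≤ 1 := by nlinarith [hu, hv]
  -- lower bounds on v
  have habs : |s - r*t| ≤ v := by
    have h1 := abs_norm_sub_norm_le x₂ ((starRingEnd ℂ) x₁ * x₃)
    rwa [norm_mul, RCLike.norm_conj] at h1
  obtain ⟨hvl, hv1⟩ := abs_le.mp habs
  have hv2 : r*t - s ≤ v := by linarith
  -- (r-t)² ≤ (1-s)², (r+t)² ≤ (1+s)²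
  have hA : (r-t)^2 ≤ (1-s)^2 := by nlinarith [hv, hv1]
  have hB : (r+t)^2 ≤ (1+s)^2 := by nlinarith [hv, hv2]
  -- β ≥ 0
  have hbeta : 0 ≤ 1 - r^2 - s^2 + t^2 := by
    rcases le_or_gt r t with hc | hc
    · nlinarith
    · have e1 : r - t ≤ 1 - s := by nlinarith
      have e2 : r + t ≤ 1 + s := by nlinarith
      nlinarith [mul_le_mul e1 e2 (by linarith) (by linarith)]
  refine ⟨hr, hs, ht1, hbeta, ?_⟩
  -- 2δ ≤ β
  have hid : d^2 = v^2 - (1-r^2)*(s^2-t^2) := ident2 x₁ x₂ x₃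
  have hsq : (2*d)^2 ≤ (1 - r^2 - s^2 + t^2)^2 := by nlinarith [hv, hid]
  nlinarith [hsq, hd0, hbeta]

/-- Description of `closure ℍ_N`. -/
theorem stmt10 :
    closure hexN
      = {q : ℂ × ℂ × ℂ × ℂ | ∃ A : Matrix (Fin 2) (Fin 2) ℂ,
          opNorm2 A ≤ 1 ∧ piMap A = q} ∧
    (∀ a x₁ x₂ x₃ : ℂ,
      (a, x₁, x₂, x₃) ∈ closure hexN ↔
        ((x₁, x₂, x₃) ∈ closure tetrablock ∧
          ((a = 0 ∧ x₃ = x₁ * x₂) ∨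
            (a ≠ 0 ∧
              (1 - ‖x₁‖ ^ 2 - ‖x₂‖ ^ 2 + ‖x₃‖ ^ 2) -
                  Real.sqrt ((1 - ‖x₁‖ ^ 2 - ‖x₂‖ ^ 2 + ‖x₃‖ ^ 2) ^ 2
                    - 4 * ‖x₁ * x₂ - x₃‖ ^ 2)
                ≤ 2 * ‖a‖ ^ 2 ∧
              2 * ‖a‖ ^ 2 ≤
                (1 - ‖x₁‖ ^ 2 - ‖x₂‖ ^ 2 + ‖x₃‖ ^ 2) +
                  Real.sqrt ((1 - ‖x₁‖ ^ 2 - ‖x₂‖ ^ 2 + ‖x₃‖ ^ 2) ^ 2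
                    - 4 * ‖x₁ * x₂ - x₃‖ ^ 2))))) := by
  refine ⟨closure_hexN_eq, ?_⟩
  intro a x₁ x₂ x₃
  rw [closure_hexN_eq]
  constructor
  · rintro ⟨A, hA, hπ⟩
    obtain ⟨h1, h2, h3, h4⟩ : A 1 0 = a ∧ A 0 0 = x₁ ∧ A 1 1 = x₂ ∧ A.det = x₃ := by
      simpa [piMap, Prod.ext_iff] using hπ
    constructor
    · have := mem_closure_tetra_of_le A hA
      rwa [h2, h3, h4] at this
    · set b := A 0 1 with hb
      have hdet : x₃ = x₁*x₂ - b*a := by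
        rw [← h2, ← h3, ← h1, ← h4, Matrix.det_fin_two]
      rcases eq_or_ne a 0 with ha | ha
      · exact Or.inl ⟨ha, by rw [hdet, ha, mul_zero, sub_zero]⟩
      · refine Or.inr ⟨ha, ?_⟩
        have hcond := ((opNorm2_le_one_iff A).mp hA).2
        rw [h1, h2, h3, h4, ← hb] at hcond
        have hd : ‖x₁*x₂ - x₃‖ = ‖b‖*‖a‖ := by
          rw [hdet, show x₁*x₂ - (x₁*x₂ - b*a) = b*a by ring, norm_mul]
        have h5 : ‖a‖^2 + ‖b‖^2 ≤ 1 - ‖x₁‖^2 - ‖x₂‖^2 + ‖x₃‖^2 := by linarith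
        have hkey : (2*‖a‖^2 - (1 - ‖x₁‖^2 - ‖x₂‖^2 + ‖x₃‖^2))^2
            ≤ (1 - ‖x₁‖^2 - ‖x₂‖^2 + ‖x₃‖^2)^2 - 4*‖x₁*x₂ - x₃‖^2 := by
          rw [hd]
          nlinarith [mul_nonneg (sq_nonneg ‖a‖) (sub_nonneg.mpr h5)]
        have habs : |2*‖a‖^2 - (1 - ‖x₁‖^2 - ‖x₂‖^2 + ‖x₃‖^2)|
            ≤ Real.sqrt ((1 - ‖x₁‖^2 - ‖x₂‖^2 + ‖x₃‖^2)^2 - 4*‖x₁*x₂ - x₃‖^2) := by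
          rw [← Real.sqrt_sq_eq_abs]
          exact Real.sqrt_le_sqrt hkey
        obtain ⟨hl, hr⟩ := abs_le.mp habs
        exact ⟨by linarith, by linarith⟩
  · rintro ⟨hcl, hcase⟩
    obtain ⟨hr1, hs1, ht1, hb0, hbd⟩ := closure_facts hcl
    dsimp only at hr1 hs1 ht1 hb0 hbd
    rcases hcase with ⟨ha, he⟩ | ⟨ha, h1, h2⟩
    · refine ⟨!![x₁, 0; 0, x₂], ?_, ?_⟩
      · rw [opNorm2_le_one_iff]
        have e : (!![x₁, 0; 0, x₂] : Matrix (Fin 2) (Fin 2) ℂ).det = x₁ * x₂ := by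
          rw [Matrix.det_fin_two_of]; ring
        have e00 : (!![x₁, 0; 0, x₂] : Matrix (Fin 2) (Fin 2) ℂ) 0 0 = x₁ := rfl
        have e01 : (!![x₁, 0; 0, x₂] : Matrix (Fin 2) (Fin 2) ℂ) 0 1 = 0 := rfl
        have e10 : (!![x₁, 0; 0, x₂] : Matrix (Fin 2) (Fin 2) ℂ) 1 0 = 0 := rfl
        have e11 : (!![x₁, 0; 0, x₂] : Matrix (Fin 2) (Fin 2) ℂ) 1 1 = x₂ := rfl
        rw [e00, e01, e10, e11, e, norm_mul]
        simp only [norm_zero]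
        have hp1 : ‖x₁‖^2 ≤ 1 := pow_le_one₀ (norm_nonneg x₁) hr1
        have hp2 : ‖x₂‖^2 ≤ 1 := pow_le_one₀ (norm_nonneg x₂) hs1
        constructor
        · nlinarith [hp1, hp2]
        · nlinarith [mul_nonneg (sub_nonneg.mpr hp1) (sub_nonneg.mpr hp2)]
      · have e : (!![x₁, 0; 0, x₂] : Matrix (Fin 2) (Fin 2) ℂ).det = x₁ * x₂ := by
          rw [Matrix.det_fin_two_of]; ring
        simp [piMap, e, ha, he]
    · set b : ℂ := (x₁*x₂ - x₃)/a with hbdef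
      have hA0 : (0:ℝ) < ‖a‖ := norm_pos_iff.mpr ha
      have hdet : (!![x₁, b; a, x₂] : Matrix (Fin 2) (Fin 2) ℂ).det = x₃ := by
        rw [Matrix.det_fin_two_of, hbdef]
        field_simp
        ring
      have hσ2 : Real.sqrt ((1 - ‖x₁‖^2 - ‖x₂‖^2 + ‖x₃‖^2)^2 - 4*‖x₁*x₂ - x₃‖^2)^2
          = (1 - ‖x₁‖^2 - ‖x₂‖^2 + ‖x₃‖^2)^2 - 4*‖x₁*x₂ - x₃‖^2 := by
        apply Real.sq_sqrt
        nlinarith [norm_nonneg (x₁*x₂ - x₃)]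
      have hq : (2*‖a‖^2 - (1 - ‖x₁‖^2 - ‖x₂‖^2 + ‖x₃‖^2))^2
          ≤ (1 - ‖x₁‖^2 - ‖x₂‖^2 + ‖x₃‖^2)^2 - 4*‖x₁*x₂ - x₃‖^2 := by
        nlinarith [mul_nonneg (by linarith : (0:ℝ) ≤ (1 - ‖x₁‖^2 - ‖x₂‖^2 + ‖x₃‖^2)
            + Real.sqrt ((1 - ‖x₁‖^2 - ‖x₂‖^2 + ‖x₃‖^2)^2 - 4*‖x₁*x₂ - x₃‖^2) - 2*‖a‖^2)
          (by linarith : (0:ℝ) ≤ 2*‖a‖^2 - (1 - ‖x₁‖^2 - ‖x₂‖^2 + ‖x₃‖^2)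
            + Real.sqrt ((1 - ‖x₁‖^2 - ‖x₂‖^2 + ‖x₃‖^2)^2 - 4*‖x₁*x₂ - x₃‖^2)), hσ2]
      have hb2 : ‖b‖^2 = ‖x₁*x₂ - x₃‖^2/‖a‖^2 := by
        rw [hbdef, norm_div, div_pow]
      have hkey2 : ‖a‖^2*‖a‖^2 - (1 - ‖x₁‖^2 - ‖x₂‖^2 + ‖x₃‖^2)*‖a‖^2
          + ‖x₁*x₂ - x₃‖^2 ≤ 0 := by nlinarith [hq]
      have h7 : ‖a‖^2 + ‖b‖^2 ≤ 1 - ‖x₁‖^2 - ‖x₂‖^2 + ‖x₃‖^2 := by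
        have hdiv : ‖x₁*x₂ - x₃‖^2/‖a‖^2 ≤ (1 - ‖x₁‖^2 - ‖x₂‖^2 + ‖x₃‖^2) - ‖a‖^2 := by
          rw [div_le_iff₀ (pow_pos hA0 2)]
          nlinarith [hkey2]
        rw [hb2]
        linarith
      refine ⟨!![x₁, b; a, x₂], ?_, ?_⟩
      · rw [opNorm2_le_one_iff]
        have e00 : (!![x₁, b; a, x₂] : Matrix (Fin 2) (Fin 2) ℂ) 0 0 = x₁ := rfl
        have e01 : (!![x₁, b; a, x₂] : Matrix (Fin 2) (Fin 2) ℂ) 0 1 = b := rfl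
        have e10 : (!![x₁, b; a, x₂] : Matrix (Fin 2) (Fin 2) ℂ) 1 0 = a := rfl
        have e11 : (!![x₁, b; a, x₂] : Matrix (Fin 2) (Fin 2) ℂ) 1 1 = x₂ := rfl
        rw [e00, e01, e10, e11, hdet]
        have hp3 : ‖x₃‖^2 ≤ 1 := pow_le_one₀ (norm_nonneg x₃) ht1
        constructor
        · nlinarith [hp3]
        · nlinarith
      · simp [piMap, hdet]
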